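/- For any real d×d matrix A, |det(A) - 1| ≤ (dist(A, SO(d)) + 1)^d - 1, where dist(A, SO(d)) is the distance from A to the special orthogonal group in the Frobenius norm. -/

import Mathlib

open scoped BigOperators
open Matrix

/-- The Frobenius norm of a real square matrix. -/
noncomputable def frobNorm (d : ℕ) (A : Matrix (Fin d) (Fin d) ℝ) : ℝ :=
  Real.sqrt (∑ i, ∑ j, (A i j) ^ 2)

/-- The Frobenius distance from a matrix to the special orthogonal group `SO(d)`. -/
noncomputable def distSO (d : ℕ) (A : Matrix (Fin d) (Fin d) ℝ) : ℝ :=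
  sInf {x : ℝ | ∃ R : Matrix (Fin d) (Fin d) ℝ,
    Rᵀ * R = 1 ∧ R.det = 1 ∧ x = frobNorm d (A - R)}

private lemma sq_sum_eq_trace' {n : ℕ} (X : Matrix (Fin n) (Fin n) ℝ) :
    ∑ i, ∑ j, (X i j) ^ 2 = Matrix.trace (Xᵀ * X) := by
  simp only [Matrix.trace, Matrix.diag, Matrix.mul_apply, Matrix.transpose_apply, sq]
  exact Finset.sum_comm

private lemma amgm_prod_le_one {n : ℕ} (hn : 0 < n) (μ : Fin n → ℝ) (h0 : ∀ i, 0 ≤ μ i)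
    (hsum : ∑ i, μ i = (n : ℝ)) : ∏ i, μ i ≤ 1 := by
  have hw : ∑ _i : Fin n, (n : ℝ)⁻¹ = 1 := by
    simp [Finset.sum_const]
    field_simp
  have hg := Real.geom_mean_le_arith_mean_weighted Finset.univ (fun _ => (n:ℝ)⁻¹) μ
    (fun i _ => by positivity) hw (fun i _ => h0 i)
  have hr : ∑ i, (n:ℝ)⁻¹ * μ i = 1 := by
    rw [← Finset.mul_sum, hsum]
    field_simp
  rw [hr] at hg
  have key : ∏ i, μ i = (∏ i, μ i ^ ((n:ℝ)⁻¹)) ^ (n : ℕ) := by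
    rw [← Finset.prod_pow]
    congr 1
    ext i
    rw [← Real.rpow_natCast (μ i ^ ((n:ℝ)⁻¹)) n, ← Real.rpow_mul (h0 i)]
    rw [inv_mul_cancel₀ (by positivity : (n:ℝ) ≠ 0), Real.rpow_one]
  rw [key]
  exact pow_le_one₀ (Finset.prod_nonneg fun i _ => Real.rpow_nonneg (h0 i) _) hg

private lemma abs_det_le_one_of_unit_rows {n : ℕ} (N : Matrix (Fin n) (Fin n) ℝ)
    (h : ∀ i, ∑ j, (N i j) ^ 2 = 1) : |N.det| ≤ 1 := by
  obtain rfl | hn := Nat.eq_zero_or_pos n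
  · simp [Matrix.det_isEmpty]
  · set S := N * Nᵀ with hSdef
    have hS : S.PosSemidef := by
      have := Matrix.posSemidef_self_mul_conjTranspose N
      simpa [Matrix.conjTranspose_eq_transpose_of_trivial] using this
    have hH : S.IsHermitian := hS.1
    have hdet : S.det = ∏ i, hH.eigenvalues i := by
      simpa using hH.det_eq_prod_eigenvalues
    have htr : Matrix.trace S = ∑ i, hH.eigenvalues i := by
      have hst := hH.spectral_theorem
      calc Matrix.trace S
          = Matrix.trace ((hH.eigenvectorUnitary : Matrix (Fin n) (Fin n) ℝ) *
            Matrix.diagonal (RCLike.ofReal ∘ hH.eigenvalues) *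
            (star (hH.eigenvectorUnitary : Matrix (Fin n) (Fin n) ℝ))) := by
              rw [Unitary.conjStarAlgAut_apply] at hst; rw [← hst]
        _ = ∑ i, hH.eigenvalues i := by
            rw [Matrix.trace_mul_comm, ← Matrix.mul_assoc]
            rw [Matrix.UnitaryGroup.star_mul_self]
            simp [Matrix.trace_diagonal]
    have htrS : Matrix.trace S = (n : ℝ) := by
      have h1 : Matrix.trace S = ∑ i, ∑ j, (N i j)^2 := by
        simp [hSdef, Matrix.trace, Matrix.diag, Matrix.mul_apply, sq]
      rw [h1]
      simp [h]
    have hprod : ∏ i, hH.eigenvalues i ≤ 1 := by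
      apply amgm_prod_le_one hn _ (fun i => hS.eigenvalues_nonneg i)
      rw [← htr, htrS]
    have hdetS : S.det = N.det ^ 2 := by
      rw [hSdef, Matrix.det_mul, Matrix.det_transpose, sq]
    have : N.det ^ 2 ≤ 1 := by rw [← hdetS, hdet]; exact hprod
    nlinarith [abs_nonneg N.det, sq_abs N.det]

private lemma hadamard_ineq {n : ℕ} (N : Matrix (Fin n) (Fin n) ℝ) :
    |N.det| ≤ ∏ i, Real.sqrt (∑ j, (N i j) ^ 2) := by
  by_cases hz : ∃ i, ∑ j, (N i j) ^ 2 = 0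
  · obtain ⟨i, hi⟩ := hz
    have hrow : ∀ j, N i j = 0 := by
      intro j
      have := (Finset.sum_eq_zero_iff_of_nonneg (fun j _ => sq_nonneg (N i j))).mp hi j
        (Finset.mem_univ j)
      exact pow_eq_zero_iff (two_ne_zero) |>.mp this
    rw [Matrix.det_eq_zero_of_row_eq_zero i hrow]
    simp only [abs_zero]
    exact Finset.prod_nonneg fun i _ => Real.sqrt_nonneg _
  · push_neg at hz
    set c : Fin n → ℝ := fun i => Real.sqrt (∑ j, (N i j) ^ 2) with hc
    have hcpos : ∀ i, 0 < c i := by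
      intro i
      apply Real.sqrt_pos.mpr
      exact lt_of_le_of_ne (Finset.sum_nonneg fun j _ => sq_nonneg _) (Ne.symm (hz i))
    set N' : Matrix (Fin n) (Fin n) ℝ := Matrix.of fun i j => N i j / c i with hN'
    have hrows : ∀ i, ∑ j, (N' i j) ^ 2 = 1 := by
      intro i
      have h2 : ∑ j, (N i j / c i) ^ 2 = (∑ j, (N i j)^2) / (c i)^2 := by
        rw [Finset.sum_div]
        congr 1; ext j; ring
      simp only [hN', Matrix.of_apply]
      rw [h2, hc]
      rw [Real.sq_sqrt (Finset.sum_nonneg fun j _ => sq_nonneg _)]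
      exact div_self (hz i)
    have hdet : N'.det = (∏ i, (c i)⁻¹) * N.det := by
      have h3 : N' = Matrix.diagonal (fun i => (c i)⁻¹) * N := by
        ext i j
        simp [hN', Matrix.diagonal_mul, div_eq_inv_mul]
      rw [h3, Matrix.det_mul, Matrix.det_diagonal]
    have hprodpos : (0:ℝ) < ∏ i, (c i)⁻¹ :=
      Finset.prod_pos fun i _ => inv_pos.mpr (hcpos i)
    have h1 := abs_det_le_one_of_unit_rows N' hrows
    rw [hdet, abs_mul, abs_of_pos hprodpos] at h1
    calc |N.det| = (∏ i, c i) * ((∏ i, (c i)⁻¹) * |N.det|) := by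
          rw [← mul_assoc, ← Finset.prod_mul_distrib]
          rw [Finset.prod_congr rfl (fun i _ => mul_inv_cancel₀ (hcpos i).ne')]
          simp
      _ ≤ (∏ i, c i) * 1 :=
          mul_le_mul_of_nonneg_left h1 (Finset.prod_nonneg fun i _ => (hcpos i).le)
      _ = ∏ i, c i := mul_one _

private lemma key_expansion {d : ℕ} (M : Matrix (Fin d) (Fin d) ℝ) :
    |(M + 1).det - 1| ≤ (frobNorm d M + 1) ^ d - 1 := by
  set K := frobNorm d M with hK
  have hK0 : 0 ≤ K := Real.sqrt_nonneg _
  have hrowK : ∀ i, Real.sqrt (∑ j, (M i j) ^ 2) ≤ K := by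
    intro i
    apply Real.sqrt_le_sqrt
    exact Finset.single_le_sum (f := fun i => ∑ j, (M i j)^2)
      (fun i _ => Finset.sum_nonneg fun j _ => sq_nonneg _) (Finset.mem_univ i)
  have hexp : (M + 1).det =
      ∑ s : Finset (Fin d), (Matrix.of (s.piecewise M (1 : Matrix (Fin d) (Fin d) ℝ))).det :=
    (Matrix.detRowAlternating (R := ℝ) (n := Fin d)).toMultilinearMap.map_add_univ
      (M : Fin d → Fin d → ℝ) (1 : Matrix (Fin d) (Fin d) ℝ)
  have hempty : (Matrix.of ((∅ : Finset (Fin d)).piecewise M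
      (1 : Matrix (Fin d) (Fin d) ℝ))).det = 1 := by
    erw [Finset.piecewise_empty]
    exact Matrix.det_one
  have hsplit : (M + 1).det - 1 =
      ∑ s ∈ Finset.univ.erase (∅ : Finset (Fin d)),
        (Matrix.of (s.piecewise M (1 : Matrix (Fin d) (Fin d) ℝ))).det := by
    rw [hexp, ← Finset.add_sum_erase Finset.univ _ (Finset.mem_univ ∅), hempty]
    ring
  have hbound : ∀ s : Finset (Fin d),
      |(Matrix.of (s.piecewise M (1 : Matrix (Fin d) (Fin d) ℝ))).det| ≤ K ^ s.card := by
    intro s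
    refine le_trans (hadamard_ineq _) ?_
    have hle : ∀ i : Fin d,
        Real.sqrt (∑ j, ((Matrix.of (s.piecewise M (1:Matrix (Fin d) (Fin d) ℝ))) i j) ^ 2)
          ≤ (if i ∈ s then K else 1) := by
      intro i
      by_cases hi : i ∈ s
      · simp only [hi, if_true]
        rw [show (Matrix.of (s.piecewise M (1:Matrix (Fin d) (Fin d) ℝ))) i = M i from
          Finset.piecewise_eq_of_mem _ _ _ hi]
        exact hrowK i
      · simp only [hi, if_false]
        rw [show (Matrix.of (s.piecewise M (1:Matrix (Fin d) (Fin d) ℝ))) i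
          = (1 : Matrix (Fin d) (Fin d) ℝ) i from Finset.piecewise_eq_of_notMem _ _ _ hi]
        have : ∑ j, ((1 : Matrix (Fin d) (Fin d) ℝ) i j)^2 = 1 := by
          simp [Matrix.one_apply]
        rw [this, Real.sqrt_one]
    refine le_trans (Finset.prod_le_prod (fun i _ => Real.sqrt_nonneg _) fun i _ => hle i) ?_
    have : ∏ i : Fin d, (if i ∈ s then K else 1) = ∏ i ∈ s, K := by
      rw [Finset.prod_ite_mem Finset.univ s (fun _ => K), Finset.univ_inter]
    rw [this, Finset.prod_const]
  have hsum : (K + 1) ^ d = ∑ s : Finset (Fin d), K ^ s.card := by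
    have := Finset.prod_add (fun _ : Fin d => K) (fun _ : Fin d => 1) Finset.univ
    simp only [Finset.prod_const, Finset.card_univ, Fintype.card_fin, Finset.prod_const_one,
      mul_one, Finset.powerset_univ, one_pow] at this
    exact this
  calc |(M + 1).det - 1|
      ≤ ∑ s ∈ Finset.univ.erase (∅ : Finset (Fin d)),
          |(Matrix.of (s.piecewise M (1 : Matrix (Fin d) (Fin d) ℝ))).det| := by
        rw [hsplit]; exact Finset.abs_sum_le_sum_abs _ _
    _ ≤ ∑ s ∈ Finset.univ.erase (∅ : Finset (Fin d)), K ^ s.card :=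
        Finset.sum_le_sum fun s _ => hbound s
    _ = (K + 1) ^ d - 1 := by
        rw [hsum, ← Finset.add_sum_erase Finset.univ (fun s : Finset (Fin d) => K ^ s.card)
          (Finset.mem_univ ∅)]
        simp

private lemma abs_det_sub_one_le_of_SO {d : ℕ} (A R : Matrix (Fin d) (Fin d) ℝ)
    (hR1 : Rᵀ * R = 1) (hR2 : R.det = 1) :
    |A.det - 1| ≤ (frobNorm d (A - R) + 1) ^ d - 1 := by
  have hRRt : R * Rᵀ = 1 := mul_eq_one_comm.mp hR1
  set M : Matrix (Fin d) (Fin d) ℝ := Rᵀ * A - 1 with hM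
  have hMadd : M + 1 = Rᵀ * A := by rw [hM]; exact sub_add_cancel _ _
  have hdetA : (M + 1).det = A.det := by
    rw [hMadd, Matrix.det_mul, Matrix.det_transpose, hR2, one_mul]
  have hMeq : M = Rᵀ * (A - R) := by
    rw [hM, Matrix.mul_sub, hR1]
  have hfrob : frobNorm d M = frobNorm d (A - R) := by
    unfold frobNorm
    congr 1
    rw [hMeq, sq_sum_eq_trace', sq_sum_eq_trace']
    have h1 : (Rᵀ * (A - R))ᵀ * (Rᵀ * (A - R)) = (A - R)ᵀ * (A - R) := by
      rw [Matrix.transpose_mul, Matrix.transpose_transpose]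
      calc (A - R)ᵀ * R * (Rᵀ * (A - R)) = (A - R)ᵀ * (R * Rᵀ) * (A - R) := by
            rw [Matrix.mul_assoc, Matrix.mul_assoc, Matrix.mul_assoc]
        _ = (A - R)ᵀ * (A - R) := by rw [hRRt, Matrix.mul_one]
    rw [h1]
  rw [← hdetA, ← hfrob]
  exact key_expansion M

theorem abs_det_sub_one_le_dist_SO (d : ℕ) (A : Matrix (Fin d) (Fin d) ℝ) :
    |A.det - 1| ≤ (distSO d A + 1) ^ d - 1 := by
  set T := {x : ℝ | ∃ R : Matrix (Fin d) (Fin d) ℝ,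
    Rᵀ * R = 1 ∧ R.det = 1 ∧ x = frobNorm d (A - R)} with hT
  have hne : T.Nonempty := ⟨frobNorm d (A - 1), 1, by simp, Matrix.det_one, rfl⟩
  have key : ∀ ε : ℝ, 0 < ε → |A.det - 1| ≤ (distSO d A + ε + 1) ^ d - 1 := by
    intro ε hε
    obtain ⟨x, hx, hlt⟩ := Real.lt_sInf_add_pos hne hε
    obtain ⟨R, hR1, hR2, rfl⟩ := hx
    refine le_trans (abs_det_sub_one_le_of_SO A R hR1 hR2) ?_
    have h0 : (0:ℝ) ≤ frobNorm d (A - R) + 1 :=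
      add_nonneg (Real.sqrt_nonneg _) zero_le_one
    have : frobNorm d (A - R) + 1 ≤ distSO d A + ε + 1 := by
      have : frobNorm d (A - R) ≤ distSO d A + ε := le_of_lt hlt
      linarith
    exact sub_le_sub_right (pow_le_pow_left₀ h0 this d) 1
  have hT2 : Filter.Tendsto (fun ε : ℝ => (distSO d A + ε + 1) ^ d - 1)
      (nhdsWithin 0 (Set.Ioi 0)) (nhds ((distSO d A + 1) ^ d - 1)) := by
    have hc : Continuous fun ε : ℝ => (distSO d A + ε + 1) ^ d - 1 := by continuity
    have := (hc.tendsto 0).mono_left (nhdsWithin_le_nhds (s := Set.Ioi (0:ℝ)))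
    simpa using this
  exact ge_of_tendsto hT2 (eventually_nhdsWithin_of_forall fun ε hε => key ε hε)
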